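/- Let G be an ICC group and K ≤ G a subgroup of finite index. Then K is an ICC group: for every k ∈ K with k ≠ 1, the set {x k x⁻¹ : x ∈ K} is infinite. -/

import Mathlib

/-- A finite index subgroup of an ICC group is ICC. -/
theorem finiteIndex_subgroup_of_icc_is_icc
    {G : Type*} [Group G]
    (hicc : ∀ g : G, g ≠ 1 → {x : G | ∃ y : G, x = y * g * y⁻¹}.Infinite)
    (K : Subgroup G) (hK : K.FiniteIndex) :
    ∀ k ∈ K, k ≠ 1 → {x : G | ∃ y ∈ K, x = y * k * y⁻¹}.Infinite := by
  intro k _hk hk1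
  by_contra hfin
  rw [Set.not_infinite] at hfin
  have hQ : Finite (G ⧸ K) := K.finite_quotient_of_finiteIndex
  apply Set.not_infinite.mpr _ (hicc k hk1)
  have hsub : {x : G | ∃ y : G, x = y * k * y⁻¹} ⊆
      ⋃ q : G ⧸ K, (fun x => Quotient.out q * x * (Quotient.out q)⁻¹) ''
        {x : G | ∃ y ∈ K, x = y * k * y⁻¹} := by
    rintro x ⟨y, rfl⟩
    refine Set.mem_iUnion.mpr ⟨QuotientGroup.mk y, ?_⟩
    set r := Quotient.out (QuotientGroup.mk y : G ⧸ K) with hr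
    have hc : r⁻¹ * y ∈ K := by
      rw [← QuotientGroup.eq]
      exact Quotient.out_eq' (QuotientGroup.mk y : G ⧸ K)
    refine ⟨(r⁻¹ * y) * k * (r⁻¹ * y)⁻¹, ⟨r⁻¹ * y, hc, rfl⟩, ?_⟩
    simp only [mul_inv_rev, inv_inv]
    group
  exact Set.Finite.subset (Set.finite_iUnion fun q => hfin.image _) hsub
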